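/- Let h ≥ 1 and let T_h be the simple graph obtained from the complete balanced binary tree of height h rooted at s by identifying all leaves with a single additional vertex t; concretely, the vertices of T_h are the binary strings of length < h together with t, the root s is the empty string, a string w of length < h−1 is adjacent to w0 and w1, and every string of length h−1 is adjacent to t. Let p, k ∈ ℕ with p ≥ h + 3 and k ≤ h, and suppose P_1, …, P_p is a family of p s-t paths in T_h with at most k shared edges. Then k = h and the set of shared edges is exactly the edge set of an s-t path in T_h of length h (a complete root-to-leaf path together with the final edge into t). -/

import Mathlib

/-- The set of shared edges of a family of `s`-`t` walks (an edge is shared if it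
occurs in two walks with distinct indices). -/
def sharedEdges {V : Type*} {G : SimpleGraph V} {s t : V} {p : ℕ}
    (P : Fin p → G.Walk s t) : Set (Sym2 V) :=
  {e | ∃ i j, i ≠ j ∧ e ∈ (P i).edges ∧ e ∈ (P j).edges}

/-- The complete balanced binary tree of height `h` rooted at the empty string,
with all leaves identified with one extra vertex `t = Sum.inr ()`:
a string `w` of length `< h - 1` is adjacent to `w0` and `w1`, and every string
of length `h - 1` is adjacent to `t`. (Strings of length `≥ h` are isolated.) -/
def treeGraph (h : ℕ) : SimpleGraph ((List Bool) ⊕ Unit) :=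
  SimpleGraph.fromRel fun u v =>
    (∃ w : List Bool, ∃ b : Bool,
      w.length + 1 < h ∧ u = Sum.inl w ∧ v = Sum.inl (w ++ [b])) ∨
    (∃ w : List Bool, w.length + 1 = h ∧ u = Sum.inl w ∧ v = Sum.inr ())

/-! ### Auxiliary machinery -/

open SimpleGraph

/-- The edge list of the canonical descending path from `v` that appends the bits in
`rest` one by one, then ends with the leaf-to-`t` edge. -/
def edgeList : List Bool → List Bool → List (Sym2 ((List Bool) ⊕ Unit))
  | v, [] => [s(Sum.inl v, Sum.inr ())]
  | v, b :: r => s(Sum.inl v, Sum.inl (v ++ [b])) :: edgeList (v ++ [b]) r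

lemma edgeList_length : ∀ (rest v : List Bool), (edgeList v rest).length = rest.length + 1
  | [], _ => rfl
  | b :: r, v => by simp [edgeList, edgeList_length r]

lemma mem_edgeList : ∀ (rest v w : List Bool), w ≠ [] → w <+: rest →
    s(Sum.inl (v ++ w.dropLast), Sum.inl (v ++ w)) ∈ edgeList v rest
  | [], _, w, hne, hpre => absurd (List.prefix_nil.mp hpre) hne
  | c :: r, v, [], hne, _ => absurd rfl hne
  | c :: r, v, b :: w', _, hpre => by
    obtain ⟨rfl, hpre'⟩ := List.cons_prefix_cons.mp hpre
    cases w' with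
    | nil =>
      simp [edgeList]
    | cons d w'' =>
      have hrec := mem_edgeList r (v ++ [b]) (d :: w'') (by simp) hpre'
      rw [edgeList, List.mem_cons]
      right
      have h1 : (b :: d :: w'').dropLast = b :: (d :: w'').dropLast := rfl
      rw [h1]
      have h2 : v ++ b :: (d :: w'').dropLast = (v ++ [b]) ++ (d :: w'').dropLast := by
        simp
      have h3 : v ++ b :: d :: w'' = (v ++ [b]) ++ (d :: w'') := by simp
      rw [h2, h3]
      exact hrec

lemma path_nil_edges {V : Type*} {G : SimpleGraph V} {u : V} (W : G.Walk u u)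
    (hW : W.IsPath) : W.edges = [] := by
  cases W with
  | nil => rfl
  | cons hadj W' =>
    rw [SimpleGraph.Walk.cons_isPath_iff] at hW
    exact absurd W'.end_mem_support hW.2

/-- Structure of paths to `t` in the tree graph: they descend and then take the leaf edge. -/
lemma walkB {h : ℕ} : ∀ {a c : (List Bool) ⊕ Unit} (W : (treeGraph h).Walk a c),
    W.IsPath → c = Sum.inr () → ∀ v : List Bool, a = Sum.inl v →
    (v = [] ∨ Sum.inl v.dropLast ∉ W.support) →
    ∃ rest, v.length + rest.length + 1 = h ∧ W.edges = edgeList v rest := by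
  intro a c W
  induction W with
  | nil =>
    intro _ hc v hv _
    subst hc
    exact absurd hv (by simp)
  | @cons u x c hadj W' ih =>
    intro hW hc v hv hnot
    subst hv
    rw [SimpleGraph.Walk.cons_isPath_iff] at hW
    obtain ⟨hW', hu⟩ := hW
    have hadj' := hadj
    rw [treeGraph, SimpleGraph.fromRel_adj] at hadj'
    obtain ⟨hne, hrel⟩ := hadj'
    rcases hrel with (⟨w, bb, hlt, hw1, hw2⟩ | ⟨w, hleq, hw1, hw2⟩) |
        (⟨w, bb, hlt, hw1, hw2⟩ | ⟨w, hleq, hw1, hw2⟩)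
    · -- down step
      obtain rfl : v = w := Sum.inl.inj hw1
      subst hw2
      obtain ⟨rest, hr1, hr2⟩ := ih hW' hc (v ++ [bb]) rfl
        (Or.inr (by rw [List.dropLast_concat]; exact hu))
      refine ⟨bb :: rest, ?_, ?_⟩
      · simp only [List.length_append, List.length_cons, List.length_nil] at hr1 ⊢
        omega
      · rw [SimpleGraph.Walk.edges_cons, hr2, edgeList]
    · -- leaf step
      obtain rfl : v = w := Sum.inl.inj hw1
      subst hw2
      subst hc
      have hnil : W'.edges = [] := path_nil_edges W' hW'
      exact ⟨[], by simpa using hleq, by rw [SimpleGraph.Walk.edges_cons, hnil, edgeList]⟩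
    · -- up step: impossible
      exfalso
      obtain rfl : v = w ++ [bb] := Sum.inl.inj hw2
      rcases hnot with h1 | h2
      · exact absurd h1 (by simp)
      · apply h2
        rw [List.dropLast_concat, SimpleGraph.Walk.support_cons]
        subst hw1
        exact List.mem_cons_of_mem _ W'.start_mem_support
    · exact absurd hw2 (by simp)

lemma dropLast_concat_getLastD (w : List Bool) (hw : w ≠ []) :
    w.dropLast ++ [w.getLastD false] = w := by
  induction w with
  | nil => exact absurd rfl hw
  | cons a l ih =>
    cases l with
    | nil => rfl
    | cons b l' =>
      have := ih (by simp)
      simpa using this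

/-- The counting argument: `p` pairwise-distinct leaves force more than `h` shared edges. -/
lemma counting {p h : ℕ} (hp : h + 3 ≤ p) (ℓ : Fin p → List Bool)
    (hlen : ∀ i, (ℓ i).length + 1 = h) (hinj : Function.Injective ℓ)
    (S : Set (Sym2 ((List Bool) ⊕ Unit))) (hS : S.Finite) (hScard : S.ncard ≤ h)
    (hSmem : ∀ (w : List Bool) (i j : Fin p), i ≠ j → w ≠ [] → w <+: ℓ i → w <+: ℓ j →
      s(Sum.inl w.dropLast, Sum.inl w) ∈ S) : False := by
  classical
  have hppos : 0 < p := by omega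
  set cnt : List Bool → ℕ := fun w => (Finset.univ.filter fun i => w <+: ℓ i).card with hcnt
  have cnt_pos : ∀ (w : List Bool) (i : Fin p), w <+: ℓ i → 1 ≤ cnt w := by
    intro w i hi
    exact Finset.card_pos.mpr ⟨i, by simp [hi]⟩
  have cnt_anti : ∀ w w' : List Bool, w <+: w' → cnt w' ≤ cnt w := by
    intro w w' hww
    apply Finset.card_le_card
    intro i hi
    simp only [Finset.mem_filter, Finset.mem_univ, true_and] at hi ⊢
    exact hww.trans hi
  have cnt_two : ∀ w : List Bool, 2 ≤ cnt w → ∃ i j : Fin p, i ≠ j ∧ w <+: ℓ i ∧ w <+: ℓ j := by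
    intro w hw
    obtain ⟨i, hi, j, hj, hij⟩ := Finset.one_lt_card.mp hw
    simp only [Finset.mem_filter, Finset.mem_univ, true_and] at hi hj
    exact ⟨i, j, hij, hi, hj⟩
  have cnt_nil : cnt [] = p := by
    simp [hcnt, List.nil_prefix, Finset.filter_true_of_mem]
  have cnt_full : ∀ i, cnt (ℓ i) = 1 := by
    intro i
    have heq : (Finset.univ.filter fun j => ℓ i <+: ℓ j) = {i} := by
      ext j
      simp only [Finset.mem_filter, Finset.mem_univ, true_and, Finset.mem_singleton]
      constructor
      · intro hj
        have hlij : (ℓ i).length = (ℓ j).length := by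
          have h1 := hlen i; have h2 := hlen j; omega
        exact (hinj (hj.eq_of_length hlij)).symm
      · rintro rfl; exact List.prefix_refl _
    rw [hcnt]
    simp only
    rw [heq, Finset.card_singleton]
  have hex : ∀ i : Fin p, ∃ m, cnt ((ℓ i).take m) = 1 := by
    intro i
    exact ⟨(ℓ i).length, by rw [List.take_length]; exact cnt_full i⟩
  set d : Fin p → ℕ := fun i => Nat.find (hex i) with hd
  set b : Fin p → List Bool := fun i => (ℓ i).take (d i) with hbdef
  have hd1 : ∀ i, cnt (b i) = 1 := fun i => Nat.find_spec (hex i)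
  have hdle : ∀ i, d i ≤ (ℓ i).length := by
    intro i
    exact Nat.find_le (by rw [List.take_length]; exact cnt_full i)
  have hdpos : ∀ i, 1 ≤ d i := by
    intro i
    by_contra hcon
    have h0 : d i = 0 := by omega
    have h1 := hd1 i
    rw [hbdef] at h1
    simp only [h0, List.take_zero] at h1
    rw [cnt_nil] at h1
    omega
  have hblen : ∀ i, (b i).length = d i := by
    intro i
    rw [hbdef]
    simp only [List.length_take]
    exact min_eq_left (hdle i)
  have hbne : ∀ i, b i ≠ [] := by
    intro i hcon
    have h1 := hblen i
    rw [hcon] at h1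
    have := hdpos i
    simp at h1
    omega
  have hqcnt : ∀ i, 2 ≤ cnt ((ℓ i).take (d i - 1)) := by
    intro i
    have h1 : 1 ≤ cnt ((ℓ i).take (d i - 1)) := cnt_pos _ i (List.take_prefix _ _)
    have hdi : d i = Nat.find (hex i) := congrFun hd i
    have h2 : cnt ((ℓ i).take (d i - 1)) ≠ 1 := Nat.find_min (hex i)
      (by rw [← hdi]; have := hdpos i; omega)
    omega
  have hdropb : ∀ i, (b i).dropLast = (ℓ i).take (d i - 1) := by
    intro i
    have hbl := hblen i
    rw [List.dropLast_eq_take, hbl, hbdef]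
    simp only [List.take_take]
    congr 1
    have := hdpos i
    omega
  -- the finite set of relevant strings
  set S0 : Finset (List Bool) :=
    (Finset.univ ×ˢ Finset.range h).image (fun x : Fin p × ℕ => (ℓ x.1).take x.2) with hS0def
  have hmemS0 : ∀ w : List Bool, 1 ≤ cnt w → w ∈ S0 := by
    intro w hw
    obtain ⟨i, hi⟩ := Finset.card_pos.mp hw
    rw [Finset.mem_filter] at hi
    have hpre := hi.2
    refine Finset.mem_image.mpr ⟨(i, w.length), ?_, (List.prefix_iff_eq_take.mp hpre).symm⟩
    rw [Finset.mem_product]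
    refine ⟨Finset.mem_univ _, Finset.mem_range.mpr ?_⟩
    have := hpre.length_le
    have := hlen i
    omega
  set S1 : Finset (List Bool) := S0.filter (fun w => w ≠ [] ∧ 2 ≤ cnt w) with hS1def
  have hmemS1 : ∀ w : List Bool, w ≠ [] → 2 ≤ cnt w → w ∈ S1 := by
    intro w h1 h2
    exact Finset.mem_filter.mpr ⟨hmemS0 w (by omega), h1, h2⟩
  -- Bound 1 : S1.card ≤ h
  set E : List Bool → Sym2 ((List Bool) ⊕ Unit) :=
    fun w => s(Sum.inl w.dropLast, Sum.inl w) with hE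
  have hinjE : Set.InjOn E ↑S1 := by
    intro w hw w' hw' heq
    rw [Finset.mem_coe, hS1def, Finset.mem_filter] at hw hw'
    have hwne := hw.2.1
    have hw'ne := hw'.2.1
    rw [hE] at heq
    simp only at heq
    rw [Sym2.eq_iff] at heq
    rcases heq with ⟨_, h2⟩ | ⟨h1, h2⟩
    · exact Sum.inl.inj h2
    · exfalso
      have e1 : w.dropLast = w' := Sum.inl.inj h1
      have e2 : w = w'.dropLast := Sum.inl.inj h2
      have l1 : w.dropLast.length = w.length - 1 := List.length_dropLast
      have l2 : w'.dropLast.length = w'.length - 1 := List.length_dropLast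
      have p1 : 0 < w.length := List.length_pos_iff.mpr hwne
      have p2 : 0 < w'.length := List.length_pos_iff.mpr hw'ne
      rw [e1] at l1
      rw [← e2] at l2
      omega
  have hcard1 : S1.card ≤ h := by
    have hsub : ↑(S1.image E) ⊆ S := by
      intro e he
      rw [Finset.mem_coe, Finset.mem_image] at he
      obtain ⟨w, hw, rfl⟩ := he
      rw [hS1def, Finset.mem_filter] at hw
      obtain ⟨i, j, hij, hi, hj⟩ := cnt_two w hw.2.2
      exact hSmem w i j hij hw.2.1 hi hj
    calc S1.card = (S1.image E).card := (Finset.card_image_of_injOn hinjE).symm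
      _ = (↑(S1.image E) : Set _).ncard := (Set.ncard_coe_finset _).symm
      _ ≤ S.ncard := Set.ncard_le_ncard hsub hS
      _ ≤ h := hScard
  -- Bound 2
  have hbinj : Function.Injective b := by
    intro i j hbij
    have h1 : (Finset.univ.filter fun m => b i <+: ℓ m).card ≤ 1 := le_of_eq (hd1 i)
    have hi : i ∈ Finset.univ.filter fun m => b i <+: ℓ m := by
      simp only [Finset.mem_filter, Finset.mem_univ, true_and]
      rw [hbdef]
      exact List.take_prefix _ _
    have hj : j ∈ Finset.univ.filter fun m => b i <+: ℓ m := by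
      simp only [Finset.mem_filter, Finset.mem_univ, true_and]
      rw [hbij, hbdef]
      exact List.take_prefix _ _
    exact Finset.card_le_one.mp h1 i hi j hj
  have hbcnt : ∀ i, cnt (b i) = 1 := hd1
  set children : Finset (List Bool) := S1 ∪ Finset.univ.image b with hchdef
  have hdisj : Disjoint S1 (Finset.univ.image b) := by
    rw [Finset.disjoint_left]
    intro w hw hw2
    rw [Finset.mem_image] at hw2
    obtain ⟨i, _, rfl⟩ := hw2
    rw [hS1def, Finset.mem_filter] at hw
    have := hbcnt i
    omega
  have hchcard : children.card = S1.card + p := by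
    rw [hchdef, Finset.card_union_of_disjoint hdisj,
      Finset.card_image_of_injective _ hbinj, Finset.card_univ, Fintype.card_fin]
  set T : Finset (List Bool) := insert [] S1 with hTdef
  have hkey : ∀ u : List Bool, 2 ≤ cnt u → u ∈ T := by
    intro u hu
    rcases eq_or_ne u [] with rfl | hne
    · exact Finset.mem_insert_self _ _
    · exact Finset.mem_insert_of_mem (hmemS1 u hne hu)
  have hmapsTo : ∀ w ∈ children, w ≠ [] ∧ w.dropLast ∈ T := by
    intro w hw
    rw [hchdef, Finset.mem_union] at hw
    rcases hw with hw | hw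
    · rw [hS1def, Finset.mem_filter] at hw
      refine ⟨hw.2.1, hkey _ ?_⟩
      exact le_trans hw.2.2 (cnt_anti _ _ (List.dropLast_prefix w))
    · rw [Finset.mem_image] at hw
      obtain ⟨i, _, rfl⟩ := hw
      refine ⟨hbne i, ?_⟩
      rw [hdropb i]
      exact hkey _ (hqcnt i)
  have hinj2 : Set.InjOn (fun w : List Bool => (w.dropLast, w.getLastD false)) ↑children := by
    intro w hw w' hw' heq
    have h1 := (hmapsTo w (by exact hw)).1
    have h2 := (hmapsTo w' (by exact hw')).1
    have e1 : w.dropLast = w'.dropLast := congrArg Prod.fst heq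
    have e2 : w.getLastD false = w'.getLastD false := congrArg Prod.snd heq
    rw [← dropLast_concat_getLastD w h1, ← dropLast_concat_getLastD w' h2, e1, e2]
  have hbound2 : children.card ≤ T.card * 2 := by
    have hle := Finset.card_le_card_of_injOn
      (fun w : List Bool => (w.dropLast, w.getLastD false))
      (t := T ×ˢ (Finset.univ : Finset Bool))
      (fun w hw => by
        rw [Finset.mem_coe, Finset.mem_product]
        exact ⟨(hmapsTo w hw).2, Finset.mem_univ _⟩) hinj2
    rw [Finset.card_product, Finset.card_univ, Fintype.card_bool] at hle
    exact hle
  have hT : T.card ≤ S1.card + 1 := Finset.card_insert_le _ _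
  omega

theorem stmt10 (h : ℕ) (hh : 1 ≤ h) (p k : ℕ) (hp : h + 3 ≤ p) (hk : k ≤ h)
    (P : Fin p → (treeGraph h).Walk (Sum.inl ([] : List Bool)) (Sum.inr ()))
    (hP : ∀ i, (P i).IsPath) (hsh : (sharedEdges P).ncard ≤ k) :
    k = h ∧
    ∃ W : (treeGraph h).Walk (Sum.inl ([] : List Bool)) (Sum.inr ()),
      W.IsPath ∧ W.length = h ∧ sharedEdges P = {e | e ∈ W.edges} := by
  classical
  have hstruct := fun i => walkB (P i) (hP i) rfl [] rfl (Or.inl rfl)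
  choose ℓ hlen hedg using hstruct
  have hlen' : ∀ i, (ℓ i).length + 1 = h := by
    intro i
    have := hlen i
    simpa using this
  have hfin : (sharedEdges P).Finite := by
    apply Set.Finite.subset (Set.finite_iUnion (fun i : Fin p => (P i).edges.finite_toSet))
    rintro e ⟨i, j, hij, hi, hj⟩
    exact Set.mem_iUnion.mpr ⟨i, hi⟩
  by_cases hinj : Function.Injective ℓ
  · exfalso
    refine counting hp ℓ hlen' hinj (sharedEdges P) hfin (le_trans hsh hk) ?_
    intro w i j hij hne hpi hpj
    refine ⟨i, j, hij, ?_, ?_⟩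
    · rw [hedg i]
      have := mem_edgeList (ℓ i) [] w hne hpi
      simpa using this
    · rw [hedg j]
      have := mem_edgeList (ℓ j) [] w hne hpj
      simpa using this
  · rw [Function.not_injective_iff] at hinj
    obtain ⟨i, j, hlij, hij⟩ := hinj
    have hEi : {e | e ∈ (P i).edges} = ↑(P i).edges.toFinset := by
      ext e; simp
    have hEicard : ({e | e ∈ (P i).edges} : Set _).ncard = h := by
      rw [hEi, Set.ncard_coe_finset, List.toFinset_card_of_nodup (hP i).isTrail.edges_nodup,
        hedg i, edgeList_length]
      have := hlen' i
      omega
    have hsub : {e | e ∈ (P i).edges} ⊆ sharedEdges P := by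
      intro e he
      refine ⟨i, j, hij, he, ?_⟩
      rw [hedg j, ← hlij, ← hedg i]
      exact he
    have heq : {e | e ∈ (P i).edges} = sharedEdges P :=
      Set.eq_of_subset_of_ncard_le hsub (by rw [hEicard]; exact le_trans hsh hk) hfin
    have hcard : (sharedEdges P).ncard = h := by rw [← heq, hEicard]
    refine ⟨by omega, P i, hP i, ?_, heq.symm⟩
    rw [← SimpleGraph.Walk.length_edges, hedg i, edgeList_length]
    have := hlen' i
    omega
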